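/- Fix 0<q<1 and α>−1. Then the double series Σ_{j=0}^{∞} (1/(λ̃_j^{(α)} π̃_j^{(α)})) · Σ_{n=0}^{j} π̃_n^{(α)} converges and equals q^{α+2} / ( (1−q)(1−q^{α+2}) ). Equivalently, (q^{α+1}/(1−q^{α+1})) Σ_{j=0}^{∞} q^j (1−γ(j+1,α+1;q)) = q^{α+2}/((1−q)(1−q^{α+2})). -/

import Mathlib

open Finset

/-- The finite q-Pochhammer symbol `(a;q)_n = ∏_{k=0}^{n−1} (1 − a q^k)`. -/
noncomputable def qPochN (q a : ℝ) (n : ℕ) : ℝ :=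
  ∏ k ∈ Finset.range n, (1 - a * q ^ k)

/-- The infinite q-Pochhammer symbol `(a;q)_∞ = ∏_{k=0}^∞ (1 − a q^k)`. -/
noncomputable def qPochInf (q a : ℝ) : ℝ :=
  ∏' k : ℕ, (1 - a * q ^ k)

/-- `γ(u,v;q) = (q^u;q)_∞/(q^{u+v};q)_∞`. -/
noncomputable def qgamma (q u v : ℝ) : ℝ :=
  qPochInf q (q ^ u) / qPochInf q (q ^ (u + v))

/-- `r_n^{(α)} = (1−γ(n+1,α+1;q))/(1−γ(n,α+1;q))`. -/
noncomputable def rQL (q α : ℝ) (n : ℕ) : ℝ :=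
  (1 - qgamma q ((n : ℝ) + 1) (α + 1)) / (1 - qgamma q (n : ℝ) (α + 1))

/-- The birth rates `λ̃_n^{(α)} = q^{−2n−α−1}(1−q^{n+α+1})/r_n^{(α)}`. -/
noncomputable def lamQL (q α : ℝ) (n : ℕ) : ℝ :=
  q ^ (-(2 * (n : ℝ)) - α - 1) * (1 - q ^ ((n : ℝ) + α + 1)) / rQL q α n

/-- The death rates `μ̃_n^{(α)} = q^{−2n−α}(1−q^n) r_n^{(α)}`. -/
noncomputable def muQL (q α : ℝ) (n : ℕ) : ℝ :=
  q ^ (-(2 * (n : ℝ)) - α) * (1 - q ^ (n : ℝ)) * rQL q α n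

/-- `π̃_n^{(α)} = ∏_{k=0}^{n−1} λ̃_k^{(α)}/μ̃_{k+1}^{(α)}` (with `π̃_0 = 1`). -/
noncomputable def piQL (q α : ℝ) (n : ℕ) : ℝ :=
  ∏ k ∈ Finset.range n, lamQL q α k / muQL q α (k + 1)

/-- `T̃_k^{(α)} = Σ_{j=0}^{k} π̃_j^{(α)}`. -/
noncomputable def TQL (q α : ℝ) (k : ℕ) : ℝ :=
  ∑ j ∈ Finset.range (k + 1), piQL q α j

/-- The descending q-Pochhammer symbol `(q^k;q^{−1})_ℓ = ∏_{i=0}^{ℓ−1}(1−q^{k−i})`. -/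
noncomputable def qPochDesc (q : ℝ) (k ℓ : ℕ) : ℝ :=
  ∏ i ∈ Finset.range ℓ, (1 - q ^ ((k : ℝ) - (i : ℝ)))

open Finset Filter
set_option linter.unusedSectionVars false
set_option maxHeartbeats 1000000

section Found
variable {q : ℝ} (hq0 : 0 < q) (hq1 : q < 1)
include hq0 hq1

lemma qfact_eq (u : ℝ) (k : ℕ) : q ^ u * q ^ k = q ^ (u + k) := by
  rw [← Real.rpow_natCast q k, ← Real.rpow_add hq0]

lemma qfact_lt_one (u : ℝ) (hu : 0 < u) (k : ℕ) : q ^ u * q ^ k < 1 := by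
  rw [qfact_eq hq0 hq1]
  exact Real.rpow_lt_one hq0.le hq1 (by positivity)

lemma qfact_pos (u : ℝ) (k : ℕ) : 0 < q ^ u * q ^ k := by positivity

lemma qfact_le (u : ℝ) (k : ℕ) : q ^ u * q ^ k ≤ q ^ u := by
  nlinarith [pow_le_one₀ hq0.le hq1.le (n := k), Real.rpow_pos_of_pos hq0 u,
    pow_nonneg hq0.le k]

lemma log_summable (u : ℝ) (hu : 0 < u) :
    Summable fun k : ℕ => Real.log (1 - q ^ u * q ^ k) := by
  rw [← summable_neg_iff]
  have hqu1 : q ^ u < 1 := by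
    have := qfact_lt_one hq0 hq1 u hu 0
    simpa using this
  have hqu0 : 0 < q ^ u := Real.rpow_pos_of_pos hq0 u
  refine Summable.of_nonneg_of_le ?_ ?_
    (((summable_geometric_of_lt_one hq0.le hq1).mul_left (q ^ u / (1 - q ^ u))))
  · intro k
    have h1 := qfact_lt_one hq0 hq1 u hu k
    simp only [neg_nonneg]
    exact Real.log_nonpos (by nlinarith [qfact_pos hq0 hq1 u k])
      (by nlinarith [qfact_pos hq0 hq1 u k])
  · intro k
    have h1 := qfact_lt_one hq0 hq1 u hu k
    have h2 := qfact_pos hq0 hq1 u k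
    have h3 := qfact_le hq0 hq1 u k
    have hpos : (0:ℝ) < 1 - q ^ u * q ^ k := by linarith
    have : -Real.log (1 - q ^ u * q ^ k) = Real.log (1 - q ^ u * q ^ k)⁻¹ := by
      rw [Real.log_inv]
    rw [this]
    have hle : Real.log (1 - q ^ u * q ^ k)⁻¹ ≤ (1 - q ^ u * q ^ k)⁻¹ - 1 :=
      Real.log_le_sub_one_of_pos (by positivity)
    have : (1 - q ^ u * q ^ k)⁻¹ - 1 = q ^ u * q ^ k / (1 - q ^ u * q ^ k) := by
      field_simp
      ring
    rw [this] at hle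
    refine hle.trans ?_
    rw [div_mul_eq_mul_div, div_le_div_iff₀ hpos (by linarith : (0:ℝ) < 1 - q ^ u)]
    nlinarith [mul_le_mul_of_nonneg_left h3 h2.le]

lemma hasProdP (u : ℝ) (hu : 0 < u) :
    HasProd (fun k : ℕ => 1 - q ^ u * q ^ k) (qPochInf q (q ^ u)) := by
  have := (Real.multipliable_of_summable_log
    (f := fun k : ℕ => 1 - q ^ u * q ^ k)
    (fun k => sub_pos.mpr (qfact_lt_one hq0 hq1 u hu k))
    (log_summable hq0 hq1 u hu)).hasProd
  exact this

lemma P_pos (u : ℝ) (hu : 0 < u) : 0 < qPochInf q (q ^ u) := by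
  have := Real.rexp_tsum_eq_tprod
    (f := fun k : ℕ => 1 - q ^ u * q ^ k)
    (fun k => sub_pos.mpr (qfact_lt_one hq0 hq1 u hu k))
    (log_summable hq0 hq1 u hu)
  have h2 := this
  rw [qPochInf, ← h2]
  exact Real.exp_pos _

lemma P_le_one (u : ℝ) (hu : 0 < u) : qPochInf q (q ^ u) ≤ 1 := by
  refine le_of_tendsto' (hasProdP hq0 hq1 u hu).tendsto_prod_nat (fun n => ?_)
  refine Finset.prod_le_one (fun k _ => ?_) (fun k _ => ?_)
  · have := qfact_lt_one hq0 hq1 u hu k; linarith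
  · have := qfact_pos hq0 hq1 u k; linarith

lemma P_ge (u : ℝ) (hu : 0 < u) : 1 - q ^ u / (1 - q) ≤ qPochInf q (q ^ u) := by
  refine ge_of_tendsto' (hasProdP hq0 hq1 u hu).tendsto_prod_nat (fun n => ?_)
  have key : ∀ n : ℕ, 1 - ∑ k ∈ Finset.range n, q ^ u * q ^ k ≤
      ∏ k ∈ Finset.range n, (1 - q ^ u * q ^ k) := by
    intro n
    induction n with
    | zero => simp
    | succ m ih =>
      rw [Finset.prod_range_succ, Finset.sum_range_succ]
      have hm : (0:ℝ) ≤ ∏ k ∈ Finset.range m, (1 - q ^ u * q ^ k) :=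
        Finset.prod_nonneg (fun k _ => by have := qfact_lt_one hq0 hq1 u hu k; linarith)
      have h1 := qfact_lt_one hq0 hq1 u hu m
      have h2 := qfact_pos hq0 hq1 u m
      have hS : (0:ℝ) ≤ ∑ k ∈ Finset.range m, q ^ u * q ^ k :=
        Finset.sum_nonneg (fun k _ => (qfact_pos hq0 hq1 u k).le)
      nlinarith [mul_le_mul_of_nonneg_right ih
        (by linarith : (0:ℝ) ≤ 1 - q ^ u * q ^ m), mul_nonneg hS h2.le]
  refine le_trans ?_ (key n)
  have hqu0 : 0 < q ^ u := Real.rpow_pos_of_pos hq0 u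
  have h1q : (0:ℝ) < 1 - q := by linarith
  have hgeom : ∑ k ∈ Finset.range n, q ^ k = (1 - q ^ n) / (1 - q) := by
    rw [geom_sum_eq (ne_of_lt hq1)]
    rw [div_eq_div_iff (by linarith) (by linarith)]
    ring
  have hsum : ∑ k ∈ Finset.range n, q ^ u * q ^ k ≤ q ^ u / (1 - q) := by
    rw [← Finset.mul_sum, hgeom, mul_div_assoc']
    rw [div_le_div_iff₀ h1q h1q]
    nlinarith [mul_nonneg (mul_nonneg hqu0.le h1q.le) (pow_nonneg hq0.le n)]
  linarith

lemma P_mono (u v : ℝ) (hu : 0 < u) (huv : u ≤ v) :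
    qPochInf q (q ^ u) ≤ qPochInf q (q ^ v) := by
  have hv : 0 < v := lt_of_lt_of_le hu huv
  have h1 := (hasProdP hq0 hq1 u hu).tendsto_prod_nat
  have h2 := (hasProdP hq0 hq1 v hv).tendsto_prod_nat
  refine le_of_tendsto_of_tendsto' h1 h2 (fun n => ?_)
  refine Finset.prod_le_prod (fun k _ => ?_) (fun k _ => ?_)
  · have := qfact_lt_one hq0 hq1 u hu k; linarith
  · have : q ^ v ≤ q ^ u := Real.rpow_le_rpow_of_exponent_ge hq0 hq1.le huv
    have hk : (0:ℝ) ≤ q ^ k := by positivity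
    nlinarith

lemma P_shift (u : ℝ) (hu : 0 < u) :
    qPochInf q (q ^ u) = (1 - q ^ u) * qPochInf q (q ^ (u + 1)) := by
  have hstep : ∀ k : ℕ, 1 - q ^ (u+1) * q ^ k = 1 - q ^ u * q ^ (k + 1) := fun k => by
    rw [Real.rpow_add hq0 u 1, Real.rpow_one, pow_succ]; ring
  have hm1 : Multipliable (fun n : ℕ => 1 - q ^ u * q ^ (n + 1)) :=
    ((hasProdP hq0 hq1 (u+1) (by linarith)).multipliable).congr hstep
  have h : (∏' k : ℕ, (1 - q ^ u * q ^ k))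
      = (1 - q ^ u * q ^ (0:ℕ)) * ∏' k : ℕ, (1 - q ^ u * q ^ (k + 1)) :=
    tprod_eq_zero_mul' hm1
  show (∏' k : ℕ, (1 - q ^ u * q ^ k)) = (1 - q ^ u) * ∏' k : ℕ, (1 - q ^ (u+1) * q ^ k)
  rw [h, pow_zero, mul_one]
  congr 1
  exact tprod_congr fun k => (hstep k).symm

lemma P_zero : qPochInf q (q ^ (0:ℝ)) = 0 := by
  have h : HasProd (fun k : ℕ => 1 - q ^ (0:ℝ) * q ^ k) 0 := by
    rw [HasProd]
    refine Tendsto.congr' ?_ tendsto_const_nhds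
    filter_upwards [eventually_ge_atTop ({0} : Finset ℕ)] with s hs
    refine (Finset.prod_eq_zero (i := 0) ?_ ?_).symm
    · exact hs (Finset.mem_singleton_self 0)
    · simp [Real.rpow_zero]
  exact h.tprod_eq

end Found
/-- `γ_j = γ(j, α+1; q)`. -/
noncomputable def Gam (q α : ℝ) (j : ℕ) : ℝ := qgamma q (j : ℝ) (α + 1)

/-- `δ_j = 1 - γ_j`. -/
noncomputable def Del (q α : ℝ) (j : ℕ) : ℝ := 1 - Gam q α j

section Gamma
variable {q α : ℝ} (hq0 : 0 < q) (hq1 : q < 1) (hα : -1 < α)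
include hq0 hq1 hα

omit hq0 hq1 hα in
lemma gam_def (j : ℕ) :
    Gam q α j = qPochInf q (q ^ (j : ℝ)) / qPochInf q (q ^ ((j : ℝ) + (α + 1))) := rfl

omit hα in
lemma gam_zero : Gam q α 0 = 0 := by
  have h := P_zero (q := q) hq0 hq1
  rw [gam_def, Nat.cast_zero, h, zero_div]

lemma gam_pos (j : ℕ) : 0 < Gam q α (j + 1) := by
  rw [gam_def]
  have h1 : (0:ℝ) < ((j + 1 : ℕ) : ℝ) := by positivity
  have h2 : (0:ℝ) < ((j + 1 : ℕ) : ℝ) + (α + 1) := by push_cast; linarith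
  exact div_pos (P_pos hq0 hq1 _ h1) (P_pos hq0 hq1 _ h2)

lemma gam_lt_one (j : ℕ) : Gam q α (j + 1) < 1 := by
  rw [gam_def]
  set u : ℝ := ((j + 1 : ℕ) : ℝ) with hu
  have hu0 : (0:ℝ) < u := by rw [hu]; positivity
  have ha : (0:ℝ) < α + 1 := by linarith
  have hua : 0 < u + (α + 1) := by linarith
  rw [div_lt_one (P_pos hq0 hq1 _ hua)]
  have h1 := P_shift hq0 hq1 u hu0
  have h2 := P_shift hq0 hq1 (u + (α+1)) hua
  have h3 : qPochInf q (q ^ (u+1)) ≤ qPochInf q (q ^ (u + 1 + (α+1))) :=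
    P_mono hq0 hq1 _ _ (by linarith) (by linarith)
  have h4 : 0 < qPochInf q (q ^ (u + 1 + (α+1))) := P_pos hq0 hq1 _ (by linarith)
  have h5 : q ^ (u + (α+1)) < q ^ u :=
    Real.rpow_lt_rpow_of_exponent_gt hq0 hq1 (by linarith)
  have h6 : q ^ u < 1 := Real.rpow_lt_one hq0.le hq1 hu0
  have h7 : 0 < q ^ (u + (α+1)) := Real.rpow_pos_of_pos hq0 _
  have h8 : 0 ≤ qPochInf q (q ^ (u+1)) := (P_pos hq0 hq1 _ (by linarith)).le
  have he : u + (α + 1) + 1 = u + 1 + (α + 1) := by ring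
  rw [he] at h2
  rw [h1, h2]
  nlinarith

lemma gam_rec (j : ℕ) :
    (1 - q ^ (j : ℕ)) * Gam q α (j + 1) = (1 - q ^ ((j : ℝ) + (α + 1))) * Gam q α j := by
  cases j with
  | zero => simp [gam_zero hq0 hq1]
  | succ m =>
    set u : ℝ := ((m + 1 : ℕ) : ℝ) with hudef
    have hu0 : (0:ℝ) < u := by rw [hudef]; positivity
    have ha : (0:ℝ) < α + 1 := by linarith
    have hua : 0 < u + (α + 1) := by linarith
    have h1 := P_shift hq0 hq1 u hu0
    have h2 := P_shift hq0 hq1 (u + (α+1)) hua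
    have he : u + (α + 1) + 1 = u + 1 + (α + 1) := by ring
    rw [he] at h2
    have hcast : ((m + 1 + 1 : ℕ) : ℝ) = u + 1 := by push_cast [hudef]; ring
    have hq : q ^ ((m+1 : ℕ)) = q ^ u := by
      rw [hudef, Real.rpow_natCast]
    rw [gam_def, gam_def, hcast, hq, h1, h2]
    have hP2 : 0 < qPochInf q (q ^ (u + 1 + (α+1))) := P_pos hq0 hq1 _ (by linarith)
    have hP1 : 0 < qPochInf q (q ^ (u + 1)) := P_pos hq0 hq1 _ (by linarith)
    have hne : (1 - q ^ (u + (α+1))) ≠ 0 := by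
      have := Real.rpow_lt_one hq0.le hq1 hua; linarith
    field_simp [hne, hP2.ne']

lemma del_pos (j : ℕ) : 0 < Del q α j := by
  cases j with
  | zero => simp [Del, gam_zero hq0 hq1]
  | succ m => have := gam_lt_one hq0 hq1 hα m; simp only [Del]; linarith

omit hα in
lemma del_zero : Del q α 0 = 1 := by simp [Del, gam_zero hq0 hq1]

lemma gam_le_one (j : ℕ) : Gam q α j ≤ 1 := by
  cases j with
  | zero => rw [gam_zero hq0 hq1]; norm_num
  | succ m => exact (gam_lt_one hq0 hq1 hα m).le

lemma del_le (j : ℕ) : Del q α j ≤ q ^ j / (1 - q) := by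
  have h1q : (0:ℝ) < 1 - q := by linarith
  cases j with
  | zero =>
    rw [del_zero hq0 hq1, pow_zero, le_div_iff₀ h1q]
    nlinarith
  | succ m =>
    set u : ℝ := ((m + 1 : ℕ) : ℝ) with hudef
    have hu0 : (0:ℝ) < u := by rw [hudef]; positivity
    have hua : 0 < u + (α + 1) := by linarith
    have hPu0 : 0 < qPochInf q (q ^ u) := P_pos hq0 hq1 _ hu0
    have hPua : 0 < qPochInf q (q ^ (u + (α+1))) := P_pos hq0 hq1 _ hua
    have hPua1 : qPochInf q (q ^ (u + (α+1))) ≤ 1 := P_le_one hq0 hq1 _ hua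
    have hge : 1 - q ^ u / (1 - q) ≤ qPochInf q (q ^ u) := P_ge hq0 hq1 u hu0
    have hstep : qPochInf q (q ^ u) ≤ Gam q α (m + 1) := by
      rw [gam_def, le_div_iff₀ hPua]
      nlinarith
    have hq : q ^ ((m+1 : ℕ)) = q ^ u := by rw [hudef, Real.rpow_natCast]
    simp only [Del]
    rw [hq]
    linarith

lemma gam_mono (j : ℕ) : Gam q α j < Gam q α (j + 1) := by
  cases j with
  | zero => rw [gam_zero hq0 hq1]; exact gam_pos hq0 hq1 hα 0
  | succ m =>
    have hrec := gam_rec hq0 hq1 hα (m + 1)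
    have hj1 : q ^ ((m + 1 : ℕ)) < 1 := pow_lt_one₀ hq0.le hq1 (by omega)
    have hj0 : (0:ℝ) < q ^ ((m + 1 : ℕ)) := by positivity
    have hlt : q ^ (((m+1 : ℕ) : ℝ) + (α + 1)) < q ^ ((m + 1 : ℕ)) := by
      rw [← Real.rpow_natCast q (m+1)]
      exact Real.rpow_lt_rpow_of_exponent_gt hq0 hq1 (by linarith)
    have hpos := gam_pos hq0 hq1 hα m
    nlinarith

lemma qA_lt_one : q ^ (α + 1) < 1 := Real.rpow_lt_one hq0.le hq1 (by linarith)

lemma qX_lt_one (n : ℕ) : q ^ ((n : ℝ) + (α + 1)) < 1 :=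
  Real.rpow_lt_one hq0.le hq1
    (by have : (0:ℝ) ≤ (n : ℝ) := Nat.cast_nonneg n; linarith)

lemma ddiff (n : ℕ) :
    (1 - q ^ ((n : ℝ) + (α + 1))) * (Del q α n - Del q α (n + 1))
      = Gam q α (n + 1) * q ^ n * (1 - q ^ (α + 1)) := by
  have hrec := gam_rec hq0 hq1 hα n
  have hexp : q ^ ((n : ℝ) + (α + 1)) = q ^ n * q ^ (α + 1) := by
    rw [Real.rpow_add hq0, Real.rpow_natCast]
  rw [hexp] at hrec ⊢
  simp only [Del]
  linear_combination hrec

lemma key_step (n : ℕ) :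
    (Del q α (n + 1) - Del q α (n + 2)) * (1 - q ^ (n + 1))
      = q * (1 - q ^ ((n : ℝ) + (α + 1))) * (Del q α n - Del q α (n + 1)) := by
  have h1 := ddiff hq0 hq1 hα n
  have h2 := ddiff hq0 hq1 hα (n + 1)
  have h3 := gam_rec hq0 hq1 hα (n + 1)
  have hcast : ((n + 1 : ℕ) : ℝ) + (α + 1) = ((n : ℝ) + 1) + (α + 1) := by push_cast; ring
  rw [hcast] at h2 h3
  have hX1 : q ^ (((n : ℝ) + 1) + (α + 1)) < 1 :=
    Real.rpow_lt_one hq0.le hq1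
      (by have : (0:ℝ) ≤ (n : ℝ) := Nat.cast_nonneg n; linarith)
  have hne : (1 : ℝ) - q ^ (((n : ℝ) + 1) + (α + 1)) ≠ 0 := by linarith
  apply mul_left_cancel₀ hne
  linear_combination (1 - q ^ (n+1)) * h2 + q ^ (n+1) * (1 - q ^ (α+1)) * h3
    - q * (1 - q ^ (((n:ℝ)+1) + (α+1))) * h1

lemma rQL_eq (n : ℕ) : rQL q α n = Del q α (n + 1) / Del q α n := by
  have hc : ((n : ℝ) + 1) = ((n + 1 : ℕ) : ℝ) := by push_cast; ring
  rw [rQL, hc]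
  rfl

lemma lamQL_eq (n : ℕ) :
    lamQL q α n = q ^ (-(2 * (n : ℝ)) - α - 1) * (1 - q ^ ((n : ℝ) + (α + 1)))
      * Del q α n / Del q α (n + 1) := by
  have hc : (n : ℝ) + α + 1 = (n : ℝ) + (α + 1) := by ring
  rw [lamQL, rQL_eq hq0 hq1 hα, hc]
  rw [div_div_eq_mul_div]

lemma ratio (n : ℕ) :
    lamQL q α n / muQL q α (n + 1)
      = q * (1 - q ^ ((n : ℝ) + (α + 1))) * Del q α n
        / ((1 - q ^ (n + 1)) * Del q α (n + 2)) := by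
  have hmu : muQL q α (n + 1)
      = q ^ (-(2 * ((n + 1 : ℕ) : ℝ)) - α) * (1 - q ^ (n + 1))
        * (Del q α (n + 2) / Del q α (n + 1)) := by
    rw [muQL, rQL_eq hq0 hq1 hα]
    congr 2
    rw [Real.rpow_natCast]
  have hpowsplit : q ^ (-(2 * (n : ℝ)) - α - 1)
      = q * q ^ (-(2 * ((n + 1 : ℕ) : ℝ)) - α) := by
    rw [show (-(2 * (n : ℝ)) - α - 1) = 1 + (-(2 * ((n + 1 : ℕ) : ℝ)) - α) by push_cast; ring,
      Real.rpow_add hq0, Real.rpow_one]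
  have hD0 := (del_pos hq0 hq1 hα n).ne'
  have hD1 := (del_pos hq0 hq1 hα (n + 1)).ne'
  have hD2 := (del_pos hq0 hq1 hα (n + 2)).ne'
  have hp : (1 : ℝ) - q ^ (n + 1) ≠ 0 := by
    have := pow_lt_one₀ hq0.le hq1 (show n + 1 ≠ 0 by omega) (a := q); linarith
  have hE : (q : ℝ) ^ (-(2 * ((n + 1 : ℕ) : ℝ)) - α) ≠ 0 := (Real.rpow_pos_of_pos hq0 _).ne'
  rw [lamQL_eq hq0 hq1 hα, hmu, hpowsplit]
  field_simp

lemma pi_eq (n : ℕ) :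
    piQL q α n * (Del q α n * Del q α (n + 1) * Gam q α 1)
      = Del q α 1 * (Del q α n - Del q α (n + 1)) := by
  induction n with
  | zero =>
    simp only [piQL, Finset.range_zero, Finset.prod_empty, Del, gam_zero hq0 hq1]
    ring
  | succ n ih =>
    have hpi : piQL q α (n + 1) = piQL q α n * (lamQL q α n / muQL q α (n + 1)) := by
      rw [piQL, Finset.prod_range_succ, ← piQL]
    rw [hpi, ratio hq0 hq1 hα n]
    have hD0 := (del_pos hq0 hq1 hα n).ne'
    have hD1 := (del_pos hq0 hq1 hα (n + 1)).ne'
    have hD2 := (del_pos hq0 hq1 hα (n + 2)).ne'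
    have hp : (1 : ℝ) - q ^ (n + 1) ≠ 0 := by
      have := pow_lt_one₀ hq0.le hq1 (show n + 1 ≠ 0 by omega) (a := q); linarith
    have hkey := key_step hq0 hq1 hα n
    rw [mul_div_assoc', div_mul_eq_mul_div, div_eq_iff (mul_ne_zero hp hD2)]
    linear_combination (q * (1 - q ^ ((n:ℝ) + (α+1))) * Del q α (n + 2)) * ih
      - Del q α 1 * Del q α (n + 2) * hkey

lemma pi_div (n : ℕ) :
    piQL q α n = Del q α 1 / Gam q α 1 * (1 / Del q α (n + 1) - 1 / Del q α n) := by
  have h := pi_eq hq0 hq1 hα n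
  have hD0 := (del_pos hq0 hq1 hα n).ne'
  have hD1 := (del_pos hq0 hq1 hα (n + 1)).ne'
  have hg1 := (gam_pos hq0 hq1 hα 0).ne'
  field_simp
  linear_combination h

lemma Tsum_eq (j : ℕ) :
    ∑ n ∈ Finset.range (j + 1), piQL q α n
      = Del q α 1 / Gam q α 1 * (1 / Del q α (j + 1) - 1) := by
  have h : ∀ n ∈ Finset.range (j + 1), piQL q α n
      = Del q α 1 / Gam q α 1 * ((fun m => 1 / Del q α m) (n + 1) - (fun m => 1 / Del q α m) n) :=
    fun n _ => pi_div hq0 hq1 hα n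
  rw [Finset.sum_congr rfl h, ← Finset.mul_sum, Finset.sum_range_sub (fun m => 1 / Del q α m)]
  rw [del_zero hq0 hq1]
  norm_num

lemma lam_pi (j : ℕ) :
    lamQL q α j * piQL q α j
      = q ^ (-(2 * (j : ℝ)) - α - 1) * q ^ j * (1 - q ^ (α + 1)) * Gam q α (j + 1)
          * Del q α 1 / (Del q α (j + 1) ^ 2 * Gam q α 1) := by
  rw [lamQL_eq hq0 hq1 hα, pi_div hq0 hq1 hα j]
  have hD0 := (del_pos hq0 hq1 hα j).ne'
  have hD1 := (del_pos hq0 hq1 hα (j + 1)).ne'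
  have hg1 : Gam q α 1 ≠ 0 := (gam_pos hq0 hq1 hα 0).ne'
  have hd := ddiff hq0 hq1 hα j
  generalize q ^ ((j:ℝ) + (α+1)) = X at hd ⊢
  field_simp
  linear_combination (Del q α 1) * hd

lemma a_eq (j : ℕ) :
    (1 / (lamQL q α j * piQL q α j)) * ∑ n ∈ Finset.range (j + 1), piQL q α n
      = q ^ (α + 1) / (1 - q ^ (α + 1)) * (q ^ j * Del q α (j + 1)) := by
  rw [Tsum_eq hq0 hq1 hα, lam_pi hq0 hq1 hα]
  have hD1p := del_pos hq0 hq1 hα (j + 1)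
  have hD1 := hD1p.ne'
  have hDone := (del_pos hq0 hq1 hα 1).ne'
  have hg1 : Gam q α 1 ≠ 0 := (gam_pos hq0 hq1 hα 0).ne'
  have hgj := (gam_pos hq0 hq1 hα j).ne'
  have hA : q ^ (α + 1) < 1 := qA_lt_one hq0 hq1 hα
  have hAne : (1:ℝ) - q ^ (α + 1) ≠ 0 := by linarith
  have hApos : (0:ℝ) < q ^ (α + 1) := Real.rpow_pos_of_pos hq0 _
  have hE : q ^ (-(2 * (j : ℝ)) - α - 1) * (q ^ (α + 1) * q ^ j * q ^ j) = 1 := by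
    rw [← Real.rpow_natCast q j, ← Real.rpow_add hq0, ← Real.rpow_add hq0,
      ← Real.rpow_add hq0]
    rw [show -(2 * (j : ℝ)) - α - 1 + (α + 1 + (j:ℝ) + (j:ℝ)) = 0 by ring, Real.rpow_zero]
  have hEne : q ^ (-(2 * (j : ℝ)) - α - 1) ≠ 0 := (Real.rpow_pos_of_pos hq0 _).ne'
  have hgd : (1:ℝ) - Del q α (j + 1) = Gam q α (j + 1) := by simp [Del]
  have hqj : (q:ℝ) ^ j ≠ 0 := by positivity
  field_simp
  linear_combination hgd - Gam q α (j+1) * hE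

lemma sumD : Summable (fun j : ℕ => Del q α j) := by
  refine Summable.of_nonneg_of_le (fun j => (del_pos hq0 hq1 hα j).le)
    (fun j => del_le hq0 hq1 hα j) ?_
  exact (summable_geometric_of_lt_one hq0.le hq1).div_const _

lemma sumD1 : Summable (fun j : ℕ => Del q α (j + 1)) :=
  (summable_nat_add_iff 1).2 (sumD hq0 hq1 hα)

lemma sumqD : Summable (fun j : ℕ => q ^ j * Del q α j) := by
  refine Summable.of_nonneg_of_le
    (fun j => mul_nonneg (by positivity) (del_pos hq0 hq1 hα j).le)
    (fun j => ?_) (sumD hq0 hq1 hα)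
  exact mul_le_of_le_one_left (del_pos hq0 hq1 hα j).le (pow_le_one₀ hq0.le hq1.le)

lemma sumqD1 : Summable (fun j : ℕ => q ^ j * Del q α (j + 1)) := by
  refine Summable.of_nonneg_of_le
    (fun j => mul_nonneg (by positivity) (del_pos hq0 hq1 hα (j+1)).le)
    (fun j => ?_) (sumD1 hq0 hq1 hα)
  exact mul_le_of_le_one_left (del_pos hq0 hq1 hα (j+1)).le (pow_le_one₀ hq0.le hq1.le)

lemma S_val : ∑' j : ℕ, q ^ j * Del q α (j + 1)
    = q * (1 - q ^ (α + 1)) / ((1 - q) * (1 - q ^ (α + 1) * q)) := by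
  set A := q ^ (α + 1) with hAdef
  set S := ∑' j : ℕ, q ^ j * Del q α (j + 1) with hS
  have hApos : (0:ℝ) < A := Real.rpow_pos_of_pos hq0 _
  have hA1 : A < 1 := qA_lt_one hq0 hq1 hα
  have hrec : ∀ j : ℕ, Del q α (j+1) - q ^ j * Del q α (j+1)
      = Del q α j - A * (q ^ j * Del q α j) - (1 - A) * q ^ j := by
    intro j
    have h := gam_rec hq0 hq1 hα j
    have hexp : q ^ ((j : ℝ) + (α + 1)) = q ^ j * A := by
      rw [hAdef, Real.rpow_add hq0, Real.rpow_natCast]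
    rw [hexp] at h
    simp only [Del]
    linear_combination -h
  have hs1 := sumD1 hq0 hq1 hα
  have hs2 := sumqD1 hq0 hq1 hα
  have hs3 := sumD hq0 hq1 hα
  have hs4 := sumqD hq0 hq1 hα
  have hs5 : Summable (fun j : ℕ => A * (q ^ j * Del q α j)) := hs4.mul_left A
  have hs6 : Summable (fun j : ℕ => (1 - A) * q ^ j) :=
    (summable_geometric_of_lt_one hq0.le hq1).mul_left _
  have heq : (∑' j : ℕ, Del q α (j+1)) - S
      = (∑' j : ℕ, Del q α j) - A * (1 + q * S) - (1 - A) * (1 - q)⁻¹ := by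
    have e0 : ∑' j : ℕ, (Del q α (j+1) - q ^ j * Del q α (j+1))
        = ∑' j : ℕ, (Del q α j - A * (q ^ j * Del q α j) - (1 - A) * q ^ j) :=
      tsum_congr hrec
    rw [Summable.tsum_sub hs1 hs2] at e0
    rw [Summable.tsum_sub (hs3.sub hs5) hs6, Summable.tsum_sub hs3 hs5, tsum_mul_left, tsum_mul_left,
      tsum_geometric_of_lt_one hq0.le hq1] at e0
    have e2 : ∑' j : ℕ, q ^ j * Del q α j = 1 + q * S := by
      have h0 := Summable.tsum_eq_zero_add hs4
      simp only [pow_zero, one_mul, del_zero hq0 hq1] at h0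
      have : ∀ j : ℕ, q ^ (j + 1) * Del q α (j + 1) = q * (q ^ j * Del q α (j + 1)) :=
        fun j => by ring
      rw [tsum_congr this, tsum_mul_left, ← hS] at h0
      exact h0
    rw [e2] at e0
    linarith [e0]
  have e1 : ∑' j : ℕ, Del q α (j+1) = (∑' j : ℕ, Del q α j) - 1 := by
    have h0 := Summable.tsum_eq_zero_add hs3
    rw [del_zero hq0 hq1] at h0
    linarith [h0]
  rw [e1] at heq
  have hq1' : (0:ℝ) < 1 - q := by linarith
  have hqA : (0:ℝ) < 1 - A * q := by nlinarith
  rw [eq_div_iff (by positivity : ((1 - q) * (1 - A * q)) ≠ 0)]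
  have hinv : (1 - q) * (1 - q)⁻¹ = 1 := mul_inv_cancel₀ hq1'.ne'
  linear_combination (-(1 - q)) * heq + (1 - A) * hinv

end Gamma

/-- Equation (6.35) (trace of the inverse of the modified q-Laguerre Jacobi operator):
`Σ_{j=0}^∞ (1/(λ̃_j π̃_j)) Σ_{n=0}^{j} π̃_n = q^{α+2}/((1−q)(1−q^{α+2}))`; equivalently
`(q^{α+1}/(1−q^{α+1})) Σ_{j=0}^∞ q^j (1−γ(j+1,α+1;q)) = q^{α+2}/((1−q)(1−q^{α+2}))`. -/
theorem modified_qLaguerre_trace_inverse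
    (q α : ℝ) (hq0 : 0 < q) (hq1 : q < 1) (hα : -1 < α) :
    Summable (fun j : ℕ =>
      (1 / (lamQL q α j * piQL q α j)) * ∑ n ∈ Finset.range (j + 1), piQL q α n) ∧
    ∑' j : ℕ, (1 / (lamQL q α j * piQL q α j)) * ∑ n ∈ Finset.range (j + 1), piQL q α n
      = q ^ (α + 2) / ((1 - q) * (1 - q ^ (α + 2))) ∧
    Summable (fun j : ℕ => q ^ j * (1 - qgamma q ((j : ℝ) + 1) (α + 1))) ∧
    q ^ (α + 1) / (1 - q ^ (α + 1)) *
        ∑' j : ℕ, q ^ j * (1 - qgamma q ((j : ℝ) + 1) (α + 1))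
      = q ^ (α + 2) / ((1 - q) * (1 - q ^ (α + 2))) := by
  have key : (fun j : ℕ => q ^ j * (1 - qgamma q ((j : ℝ) + 1) (α + 1)))
      = fun j : ℕ => q ^ j * Del q α (j + 1) := by
    funext j
    simp only [Del, Gam]
    congr 3
    push_cast
    ring
  have hA1 : q ^ (α + 1) < 1 := qA_lt_one hq0 hq1 hα
  have hApos : (0:ℝ) < q ^ (α + 1) := Real.rpow_pos_of_pos hq0 _
  have hq1' : (0:ℝ) < 1 - q := by linarith
  have hval : q ^ (α + 1) / (1 - q ^ (α + 1))
        * (q * (1 - q ^ (α + 1)) / ((1 - q) * (1 - q ^ (α + 1) * q)))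
      = q ^ (α + 2) / ((1 - q) * (1 - q ^ (α + 2))) := by
    have h2 : q ^ (α + 2) = q ^ (α + 1) * q := by
      rw [show (α + 2 : ℝ) = (α + 1) + 1 by ring, Real.rpow_add hq0, Real.rpow_one]
    have h3 : (0:ℝ) < 1 - q ^ (α + 1) * q := by nlinarith
    have n1 : (1:ℝ) - q ^ (α + 1) ≠ 0 := by linarith
    have n2 : (1:ℝ) - q ≠ 0 := by linarith
    have n3 : (1:ℝ) - q ^ (α + 1) * q ≠ 0 := by linarith
    rw [h2]
    field_simp
  have habs : (fun j : ℕ =>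
      (1 / (lamQL q α j * piQL q α j)) * ∑ n ∈ Finset.range (j + 1), piQL q α n)
      = fun j : ℕ => q ^ (α + 1) / (1 - q ^ (α + 1)) * (q ^ j * Del q α (j + 1)) :=
    funext (a_eq hq0 hq1 hα)
  refine ⟨?_, ?_, ?_, ?_⟩
  · rw [habs]
    exact (sumqD1 hq0 hq1 hα).mul_left _
  · rw [habs, tsum_mul_left, S_val hq0 hq1 hα]
    exact hval
  · rw [key]
    exact sumqD1 hq0 hq1 hα
  · rw [key, S_val hq0 hq1 hα]
    exact hval
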